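/- Let (Ω, μ) be a probability space and X : Ω → ℝ^d a random vector with ‖X(ω)‖₂ = 1 almost surely and each component square-integrable. Let C be the centered covariance matrix of X, i.e., C_{ij} = E[X_i X_j] − E[X_i]·E[X_j]. If the effective rank of C equals d (its maximal possible value) and tr(C) ≥ 1, then E[X] = 0 and C = (1/d)·I_d. -/

import Mathlib

open Matrix MeasureTheory

/-- Principal matrix logarithm of a real symmetric matrix, defined via the spectral
decomposition by applying `Real.log` to the eigenvalues (junk value `0` otherwise). -/
noncomputable def matrixLog {n : Type*} [Fintype n] [DecidableEq n]
    (A : Matrix n n ℝ) : Matrix n n ℝ :=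
  if hA : A.IsHermitian then
    (hA.eigenvectorUnitary : Matrix n n ℝ) * Matrix.diagonal (Real.log ∘ hA.eigenvalues) *
      star (hA.eigenvectorUnitary : Matrix n n ℝ)
  else 0

/-- Matrix KL divergence `MKL(P‖Q) = tr(P log P − P log Q − P + Q)`. -/
noncomputable def MKL {n : Type*} [Fintype n] [DecidableEq n]
    (P Q : Matrix n n ℝ) : ℝ :=
  (P * matrixLog P - P * matrixLog Q - P + Q).trace

/-- Matrix cross-entropy `MCE(P, Q) = tr(−P log Q + Q)`. -/
noncomputable def MCE {n : Type*} [Fintype n] [DecidableEq n]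
    (P Q : Matrix n n ℝ) : ℝ :=
  (-(P * matrixLog Q) + Q).trace

/-- Effective rank of a symmetric matrix (junk value `0` if not Hermitian), defined as the
exponential of the Shannon entropy of the normalized eigenvalue distribution; note that
`Real.log 0 = 0` in Mathlib, implementing the convention `0 · log 0 = 0`. -/
noncomputable def erank {n : Type*} [Fintype n] [DecidableEq n]
    (A : Matrix n n ℝ) : ℝ :=
  if hA : A.IsHermitian then
    Real.exp (-∑ i, (hA.eigenvalues i / ∑ k, hA.eigenvalues k) *
      Real.log (hA.eigenvalues i / ∑ k, hA.eigenvalues k))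
  else 0

/-- Total coding rate loss `L_TCR(Z) = −(1/2)·log det(I_d + (d/(Bε²))·ZZᵀ)`. -/
noncomputable def LTCR {d B : ℕ} (ε : ℝ) (Z : Matrix (Fin d) (Fin B) ℝ) : ℝ :=
  -(1 / 2) * Real.log ((1 + ((d : ℝ) / (B * ε ^ 2)) • (Z * Zᵀ)).det)

/-- If a random vector `X` on the unit sphere of `ℝ^d` (components
square-integrable) has centered covariance matrix `C` with maximal effective rank `d`
and `tr(C) ≥ 1`, then `E[X] = 0` and `C = (1/d)·I_d`. -/
theorem covariance_max_erank {d : ℕ} {Ω : Type*} [MeasurableSpace Ω]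
    (μ : Measure Ω) [IsProbabilityMeasure μ] (X : Ω → Fin d → ℝ)
    (hX : ∀ i, MemLp (fun ω => X ω i) 2 μ)
    (hnorm : ∀ᵐ ω ∂μ, ∑ i, (X ω i) ^ 2 = 1)
    (C : Matrix (Fin d) (Fin d) ℝ)
    (hC : C = Matrix.of fun i j =>
      (∫ ω, X ω i * X ω j ∂μ) - (∫ ω, X ω i ∂μ) * (∫ ω, X ω j ∂μ))
    (herank : erank C = d) (htr : 1 ≤ C.trace) :
    (∀ i, ∫ ω, X ω i ∂μ = 0) ∧ C = (d : ℝ)⁻¹ • 1 := by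
  classical
  -- d is positive
  have hd : 0 < d := by
    rcases Nat.eq_zero_or_pos d with h | h
    · subst h
      simp [Matrix.trace] at htr
      linarith
    · exact h
  have hd' : (0:ℝ) < (d:ℝ) := by exact_mod_cast hd
  -- integrability facts
  have hint1 : ∀ i, Integrable (fun ω => X ω i) μ :=
    fun i => (hX i).integrable (by norm_num)
  have hint2 : ∀ i j, Integrable (fun ω => X ω i * X ω j) μ := by
    intro i j
    have h : MemLp ((fun ω => X ω i) • (fun ω => X ω j)) 1 μ :=
      (hX j).smul (hX i) (hpqr := ⟨by rw [inv_one]; exact ENNReal.inv_two_add_inv_two⟩)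
    exact h.integrable le_rfl
  -- sum of second moments is 1
  have hsum1 : ∑ i, ∫ ω, X ω i * X ω i ∂μ = 1 := by
    rw [← integral_finset_sum _ (fun i _ => hint2 i i)]
    have : (fun ω => ∑ i, X ω i * X ω i) =ᵐ[μ] (fun _ => (1:ℝ)) := by
      filter_upwards [hnorm] with ω hω
      simpa [pow_two] using hω
    rw [integral_congr_ae this]
    simp
  -- trace formula
  have htrace : C.trace = 1 - ∑ i, (∫ ω, X ω i ∂μ)^2 := by
    rw [hC]
    simp only [Matrix.trace, Matrix.diag_apply, Matrix.of_apply]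
    rw [Finset.sum_sub_distrib, hsum1]
    congr 1
    exact Finset.sum_congr rfl fun i _ => (sq _).symm
  -- the mean vanishes
  have hmean : ∀ i, ∫ ω, X ω i ∂μ = 0 := by
    have hle : ∑ j, (∫ ω, X ω j ∂μ)^2 ≤ 0 := by linarith
    have hz : ∑ j, (∫ ω, X ω j ∂μ)^2 = 0 :=
      le_antisymm hle (Finset.sum_nonneg fun j _ => sq_nonneg _)
    intro i
    have := (Finset.sum_eq_zero_iff_of_nonneg (fun j _ => sq_nonneg (∫ ω, X ω j ∂μ))).mp hz
      i (Finset.mem_univ i)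
    exact pow_eq_zero_iff (two_ne_zero).symm.symm |>.mp this
  have hCij : ∀ i j, C i j = ∫ ω, X ω i * X ω j ∂μ := by
    intro i j
    rw [hC]
    simp [hmean i]
  have htr1 : C.trace = 1 := by
    rw [htrace]
    simp [hmean]
  -- C is Hermitian
  have hH : C.IsHermitian := by
    show Cᴴ = C
    ext i j
    rw [Matrix.conjTranspose_apply]
    simp only [star_trivial, hCij]
    exact integral_congr_ae (Filter.Eventually.of_forall fun ω => mul_comm _ _)
  -- C is positive semidefinite
  have hP : C.PosSemidef := by
    refine Matrix.PosSemidef.of_dotProduct_mulVec_nonneg hH fun x => ?_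
    have e2 : ∫ ω, (∑ i, x i * X ω i)^2 ∂μ
        = ∑ i, ∑ j, (x i * x j) * ∫ ω, X ω i * X ω j ∂μ := by
      have e1 : ∀ ω, (∑ i, x i * X ω i)^2 = ∑ i, ∑ j, (x i * x j) * (X ω i * X ω j) := by
        intro ω
        rw [sq, Finset.sum_mul_sum]
        exact Finset.sum_congr rfl fun i _ => Finset.sum_congr rfl fun j _ => by ring
      simp_rw [e1]
      rw [integral_finset_sum _ (fun i _ =>
        integrable_finset_sum _ (fun j _ => (hint2 i j).const_mul _))]
      exact Finset.sum_congr rfl fun i _ => by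
        rw [integral_finset_sum _ (fun j _ => (hint2 i j).const_mul _)]
        exact Finset.sum_congr rfl fun j _ => integral_const_mul _ _
    have key : dotProduct (star x) (C *ᵥ x) = ∫ ω, (∑ i, x i * X ω i)^2 ∂μ := by
      rw [e2]
      simp only [dotProduct, Matrix.mulVec, Pi.star_apply, star_trivial, hCij,
        Finset.mul_sum, Finset.sum_mul]
      exact Finset.sum_congr rfl fun i _ => Finset.sum_congr rfl fun j _ => by ring
    rw [key]
    exact integral_nonneg fun ω => sq_nonneg _
  -- sum of eigenvalues is the trace, which is 1
  have hUU : (hH.eigenvectorUnitary : Matrix (Fin d) (Fin d) ℝ) *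
      star (hH.eigenvectorUnitary : Matrix (Fin d) (Fin d) ℝ) = 1 :=
    (Matrix.mem_unitaryGroup_iff).mp (hH.eigenvectorUnitary).2
  have hUU' : star (hH.eigenvectorUnitary : Matrix (Fin d) (Fin d) ℝ) *
      (hH.eigenvectorUnitary : Matrix (Fin d) (Fin d) ℝ) = 1 :=
    (Matrix.mem_unitaryGroup_iff').mp (hH.eigenvectorUnitary).2
  have hev1 : ∑ i, hH.eigenvalues i = 1 := by
    have : C.trace = ∑ i, hH.eigenvalues i := by
      conv_lhs => rw [hH.spectral_theorem, Unitary.conjStarAlgAut_apply]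
      rw [Matrix.trace_mul_cycle, hUU', Matrix.one_mul, Matrix.trace_diagonal]
      simp
    rw [← this, htr1]
  have hevnn : ∀ i, 0 ≤ hH.eigenvalues i := fun i => hP.eigenvalues_nonneg i
  -- extract entropy equation from erank hypothesis
  rw [erank, dif_pos hH, hev1] at herank
  simp only [div_one] at herank
  have hlog : -∑ i, hH.eigenvalues i * Real.log (hH.eigenvalues i) = Real.log d := by
    have := congrArg Real.log herank
    rwa [Real.log_exp] at this
  -- Jensen equality case
  have hw1 : ∑ _i : Fin d, (d:ℝ)⁻¹ = 1 := by
    rw [Finset.sum_const, Finset.card_univ, Fintype.card_fin, nsmul_eq_mul]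
    field_simp
  have hsum_p : ∑ i : Fin d, (d:ℝ)⁻¹ • hH.eigenvalues i = (d:ℝ)⁻¹ := by
    simp only [smul_eq_mul, ← Finset.mul_sum, hev1, mul_one]
  have h_eq : ∑ i : Fin d, (d:ℝ)⁻¹ • (hH.eigenvalues i * Real.log (hH.eigenvalues i))
      ≤ (∑ i : Fin d, (d:ℝ)⁻¹ • hH.eigenvalues i) * Real.log (∑ i : Fin d, (d:ℝ)⁻¹ • hH.eigenvalues i) := by
    rw [hsum_p, Real.log_inv]
    simp only [smul_eq_mul, ← Finset.mul_sum]
    rw [show ∑ i, hH.eigenvalues i * Real.log (hH.eigenvalues i) = -Real.log d by linarith]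
  have key := Real.strictConvexOn_mul_log.eq_of_le_map_sum
    (t := Finset.univ) (w := fun _ : Fin d => (d:ℝ)⁻¹) (p := hH.eigenvalues)
    (fun i _ => by positivity) hw1 (fun i _ => hevnn i) h_eq
  have hevconst : ∀ i, hH.eigenvalues i = (d:ℝ)⁻¹ := by
    intro i
    have hs : ∑ j, hH.eigenvalues j = (d:ℝ) * hH.eigenvalues i := by
      rw [Finset.sum_congr rfl fun j _ =>
        key (Finset.mem_univ j) (Finset.mem_univ i)]
      rw [Finset.sum_const, Finset.card_univ, Fintype.card_fin, nsmul_eq_mul]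
    have : (d:ℝ) * hH.eigenvalues i = 1 := by rw [← hs, hev1]
    exact mul_left_cancel₀ hd'.ne' (by rw [this, mul_inv_cancel₀ hd'.ne'])
  refine ⟨hmean, ?_⟩
  have hdiag : Matrix.diagonal (RCLike.ofReal ∘ hH.eigenvalues : Fin d → ℝ)
      = (d:ℝ)⁻¹ • (1 : Matrix (Fin d) (Fin d) ℝ) := by
    have hfun : (RCLike.ofReal ∘ hH.eigenvalues : Fin d → ℝ) = fun _ => (d:ℝ)⁻¹ := by
      funext i
      simp [hevconst i]
    rw [hfun, ← Matrix.smul_one_eq_diagonal]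
  calc C = (hH.eigenvectorUnitary : Matrix (Fin d) (Fin d) ℝ) *
        Matrix.diagonal (RCLike.ofReal ∘ hH.eigenvalues) *
        star (hH.eigenvectorUnitary : Matrix (Fin d) (Fin d) ℝ) := by
          conv_lhs => rw [hH.spectral_theorem, Unitary.conjStarAlgAut_apply]
    _ = (d:ℝ)⁻¹ • 1 := by
        rw [hdiag, Matrix.mul_smul, Matrix.mul_one, Matrix.smul_mul, hUU]
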